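/- Let C be an n×n real symmetric conference matrix (symmetric, zero diagonal, ±1 off-diagonal, CᵀC = (n-1)I) with n ≥ 2. Then the condition number of C + I equals (√(n-1) + 1)/(√(n-1) - 1), i.e., σ_max(C+I)/σ_min(C+I) = (√(n-1)+1)/(√(n-1)-1). -/

import Mathlib

open Matrix

set_option maxHeartbeats 1000000 in
theorem stmt_9 (n : ℕ) (hn : 3 ≤ n)
    (C : Matrix (Fin n) (Fin n) ℝ)
    (hsym : Cᵀ = C)
    (hdiag : ∀ i, C i i = 0)
    (hoff : ∀ i j, i ≠ j → C i j = 1 ∨ C i j = -1)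
    (hconf : Cᵀ * C = ((n : ℝ) - 1) • (1 : Matrix (Fin n) (Fin n) ℝ)) :
    Real.sqrt (Finset.univ.sup' ⟨⟨0, by omega⟩, Finset.mem_univ _⟩
        (Matrix.isHermitian_conjTranspose_mul_self (C + 1)).eigenvalues) /
      Real.sqrt (Finset.univ.inf' ⟨⟨0, by omega⟩, Finset.mem_univ _⟩
        (Matrix.isHermitian_conjTranspose_mul_self (C + 1)).eigenvalues)
    = (Real.sqrt ((n : ℝ) - 1) + 1) / (Real.sqrt ((n : ℝ) - 1) - 1) := by
  set hH := Matrix.isHermitian_conjTranspose_mul_self (C + 1) with hHdef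
  have hn3 : (3:ℝ) ≤ (n:ℝ) := by exact_mod_cast hn
  set s := Real.sqrt ((n:ℝ) - 1) with hs
  have hs2 : s^2 = (n:ℝ) - 1 := Real.sq_sqrt (by linarith)
  have hs1 : 1 < s := by
    rw [hs]
    have : (1:ℝ)^2 < (n:ℝ) - 1 := by nlinarith
    exact (Real.lt_sqrt (by norm_num)).mpr this
  have hCC : C * C = ((n : ℝ) - 1) • (1 : Matrix (Fin n) (Fin n) ℝ) := by
    nth_rewrite 1 [← hsym]; exact hconf
  have hM : (C + 1)ᴴ * (C + 1) = (n:ℝ) • (1 : Matrix (Fin n) (Fin n) ℝ) + (2:ℝ) • C := by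
    rw [Matrix.conjTranspose_eq_transpose_of_trivial, transpose_add, transpose_one, hsym, add_mul, mul_add, mul_add, hCC, mul_one, one_mul,
      mul_one, sub_smul, one_smul]
    abel_nf
    module
  have key : ∀ i, hH.eigenvalues i = (n:ℝ) + 2*s ∨ hH.eigenvalues i = (n:ℝ) - 2*s := by
    intro i
    have hv := hH.mulVec_eigenvectorBasis i
    set v := ⇑(hH.eigenvectorBasis i) with hvdef
    set μ := hH.eigenvalues i with hmu
    rw [hM, add_mulVec, smul_mulVec, smul_mulVec, one_mulVec] at hv
    have hCv : C *ᵥ v = ((μ - n)/2) • v := by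
      funext x
      have hx := congrFun hv x
      simp only [Pi.add_apply, Pi.smul_apply, smul_eq_mul] at hx ⊢
      linarith
    have hv0 : v ≠ 0 := by
      have := hH.eigenvectorBasis.orthonormal.ne_zero i
      intro h; apply this; ext x; exact congrFun h x
    obtain ⟨x, hx⟩ : ∃ x, v x ≠ 0 := Function.ne_iff.mp hv0
    have hCCv : (C * C) *ᵥ v = (((μ - n)/2)^2) • v := by
      rw [← mulVec_mulVec, hCv, mulVec_smul, hCv, smul_smul]
      ring_nf
    rw [hCC, smul_mulVec, one_mulVec] at hCCv
    have heq : ((μ - n)/2)^2 = (n:ℝ) - 1 := by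
      have := congrFun hCCv x
      simp only [Pi.smul_apply, smul_eq_mul] at this
      exact mul_right_cancel₀ hx this.symm
    have hfac : (μ - n - 2*s) * (μ - n + 2*s) = 0 := by
      linear_combination 4 * heq - 4 * hs2
    rcases mul_eq_zero.mp hfac with h | h
    · left; linarith
    · right; linarith
  have htr : ∑ i, hH.eigenvalues i = (n:ℝ) * n := by
    have h1 : Matrix.trace ((C + 1)ᴴ * (C + 1)) = ∑ i, hH.eigenvalues i := by
      conv_lhs => rw [hH.spectral_theorem]
      rw [Unitary.conjStarAlgAut_apply]
      rw [trace_mul_cycle]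
      have : (star (hH.eigenvectorUnitary : Matrix (Fin n) (Fin n) ℝ)) *
          (hH.eigenvectorUnitary : Matrix (Fin n) (Fin n) ℝ) = 1 :=
        (Matrix.mem_unitaryGroup_iff').mp hH.eigenvectorUnitary.2
      rw [this, one_mul, trace_diagonal]
      simp
    have h2 : Matrix.trace ((C + 1)ᴴ * (C + 1)) = (n:ℝ) * n := by
      rw [hM, trace_add, trace_smul, trace_smul, trace_one]
      have : Matrix.trace C = 0 := by
        simp [Matrix.trace, Matrix.diag, hdiag]
      rw [this]
      simp [mul_comm]
    rw [← h1, h2]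
  have hspos : 0 < s := by linarith
  have hex1 : ∃ i, hH.eigenvalues i = (n:ℝ) + 2*s := by
    by_contra h; push_neg at h
    have hall : ∀ i ∈ Finset.univ, hH.eigenvalues i = (n:ℝ) - 2*s :=
      fun i _ => (key i).resolve_left (h i)
    rw [Finset.sum_congr rfl hall, Finset.sum_const, Finset.card_univ, Fintype.card_fin,
      nsmul_eq_mul] at htr
    nlinarith
  have hex2 : ∃ i, hH.eigenvalues i = (n:ℝ) - 2*s := by
    by_contra h; push_neg at h
    have hall : ∀ i ∈ Finset.univ, hH.eigenvalues i = (n:ℝ) + 2*s :=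
      fun i _ => (key i).resolve_right (h i)
    rw [Finset.sum_congr rfl hall, Finset.sum_const, Finset.card_univ, Fintype.card_fin,
      nsmul_eq_mul] at htr
    nlinarith
  have hsup : ∀ (h : (Finset.univ : Finset (Fin n)).Nonempty),
      Finset.univ.sup' h hH.eigenvalues = (n:ℝ) + 2*s := by
    intro h
    apply le_antisymm
    · apply Finset.sup'_le
      intro i _
      rcases key i with h' | h' <;> rw [h'] <;> linarith
    · obtain ⟨i, hi⟩ := hex1
      calc (n:ℝ) + 2*s = hH.eigenvalues i := hi.symm
        _ ≤ _ := Finset.le_sup' _ (Finset.mem_univ i)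
  have hinf : ∀ (h : (Finset.univ : Finset (Fin n)).Nonempty),
      Finset.univ.inf' h hH.eigenvalues = (n:ℝ) - 2*s := by
    intro h
    apply le_antisymm
    · obtain ⟨i, hi⟩ := hex2
      calc Finset.univ.inf' h hH.eigenvalues ≤ hH.eigenvalues i :=
            Finset.inf'_le _ (Finset.mem_univ i)
        _ = (n:ℝ) - 2*s := hi
    · apply Finset.le_inf'
      intro i _
      rcases key i with h' | h' <;> rw [h'] <;> linarith
  erw [hsup, hinf]
  have h1 : (n:ℝ) + 2*s = (s+1)^2 := by linear_combination -hs2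
  have h2 : (n:ℝ) - 2*s = (s-1)^2 := by linear_combination -hs2
  rw [h1, h2, Real.sqrt_sq (by linarith), Real.sqrt_sq (by linarith)]
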